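/- Let D = 1 and 1 ≤ A < 2, and let N be the NAF representation of a positive integer n with highest index λ. Then T(N, λ) ≤ A + λ, i.e., the NAF parallel computation time exceeds λ·D by at most A. -/
import Mathlib


noncomputable def T (D A : ℝ) (d : ℕ → ℤ) : ℕ → ℝ
  | 0 => if d 0 = 0 then 0 else (((d 0).natAbs : ℝ) - 1) * A
  | i + 1 =>
      if d (i + 1) = 0 then T D A d i
      else if ∀ j < i + 1, d j = 0 then
        ((i : ℝ) + 1) * D + (((d (i + 1)).natAbs : ℝ) - 1) * A
      else max (T D A d i) (((i : ℝ) + 1) * D) + ((d (i + 1)).natAbs : ℝ) * A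

noncomputable def delta (A : ℝ) (d : ℕ → ℤ) : ℕ → ℝ
  | 0 => 0
  | i + 1 =>
      if d (i + 1) = 0 then delta A d i - 1
      else if ∀ j < i + 1, d j = 0 then 0
      else max (delta A d i + (A - 1)) A

def val (d : ℕ → ℤ) (lam : ℕ) : ℤ := ∑ i ∈ Finset.range (lam + 1), d i * 2 ^ i


lemma natAbs_one_of (d : ℕ → ℤ) (hd : ∀ i, d i = -1 ∨ d i = 0 ∨ d i = 1)
    (k : ℕ) (hk : d k ≠ 0) : ((d k).natAbs : ℝ) = 1 := by
  rcases hd k with h | h | h <;> simp [h] at * <;> norm_num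

lemma key (A : ℝ) (hA1 : 1 ≤ A) (hA2 : A < 2)
    (d : ℕ → ℤ)
    (hd : ∀ i, d i = -1 ∨ d i = 0 ∨ d i = 1)
    (hnaf : ∀ i, d i * d (i + 1) = 0) :
    ∀ i, T 1 A d i ≤ i + A ∧ (d i = 0 → T 1 A d i ≤ i + A - 1) := by
  intro i
  induction i with
  | zero =>
    by_cases h : d 0 = 0
    · simp [T, h]; constructor <;> linarith
    · constructor
      · simp [T, h, natAbs_one_of d hd 0 h]; linarith
      · intro h0; exact absurd h0 h
  | succ i ih =>
    by_cases h : d (i + 1) = 0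
    · simp only [T, if_pos h]
      push_cast
      constructor
      · linarith [ih.1]
      · intro _; linarith [ih.1]
    · have hone : ((d (i+1)).natAbs : ℝ) = 1 := natAbs_one_of d hd (i+1) h
      by_cases hall : ∀ j < i + 1, d j = 0
      · simp only [T, if_neg h, if_pos hall, hone]
        constructor
        · push_cast; nlinarith
        · intro h0; exact absurd h0 h
      · have hdi : d i = 0 := by
          have := hnaf i
          rcases mul_eq_zero.mp this with h1 | h1
          · exact h1
          · exact absurd h1 h
        have hTi : T 1 A d i ≤ (i : ℝ) + 1 := by
          have := ih.2 hdi; linarith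
        simp only [T, if_neg h, if_neg hall, hone]
        have hmax : max (T 1 A d i) ((i : ℝ) + 1) * 1 ≤ (i : ℝ) + 1 := by
          rw [mul_one]; exact max_le hTi le_rfl
        constructor
        · push_cast
          have : max (T 1 A d i) (((i : ℝ) + 1) * 1) + 1 * A ≤ (i : ℝ) + 1 + A := by
            rw [mul_one, one_mul]
            have := max_le hTi (le_refl ((i : ℝ) + 1))
            linarith
          linarith [this]
        · intro h0; exact absurd h0 h

/-- For D = 1 and 1 ≤ A < 2, the NAF representation of a positive integer n
with highest index λ satisfies T(N, λ) ≤ A + λ. -/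
theorem stmt14 (A : ℝ) (hA1 : 1 ≤ A) (hA2 : A < 2) (n lam : ℕ) (hn : 0 < n)
    (d : ℕ → ℤ)
    (hd : ∀ i, d i = -1 ∨ d i = 0 ∨ d i = 1)
    (hnaf : ∀ i, d i * d (i + 1) = 0)
    (hhigh : ∀ i, lam < i → d i = 0)
    (hval : val d lam = (n : ℤ)) :
    T 1 A d lam ≤ A + lam := by
  have := (key A hA1 hA2 d hd hnaf lam).1
  linarith
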